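/- arXiv:2303.16277 — 2 statements merged into one kernel-verified Lean document; each statement's English description precedes it below -/
import Mathlib

section
/- Let f, g : H → ℝ be convex continuous functions on a real Hilbert space H, with C_f := argmin f nonempty, and let γ : [0, T_max) → H be the solution of the subgradient system γ'(t) ∈ −∂f(γ(t)) a.e., γ(0) = x. Define a(t) := f(γ(t)) − g(γ(t)). Then for almost every t ∈ [0, T_max), a is differentiable at t and a'(t) ≤ (s_g(γ(t)) − s_f(γ(t))) · s_f(γ(t)). -/
open Set Metric MeasureTheory Filter Bornology RealInnerProductSpace

variable {H : Type*} [NormedAddCommGroup H] [InnerProductSpace ℝ H] [CompleteSpace H]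

/-- The subdifferential of `f` at `x`. -/
def subdiff (f : H → ℝ) (x : H) : Set H :=
  {v | ∀ y, f x + ⟪v, y - x⟫ ≤ f y}

/-- The slope of `f` at `x`: the distance from `0` to the subdifferential. -/
noncomputable def slopeFn (f : H → ℝ) (x : H) : ℝ :=
  Metric.infDist 0 (subdiff f x)

/-- The set of (global) minimizers of `f`. -/
def argminSet (f : H → ℝ) : Set H := {x | ∀ y, f x ≤ f y}

/-- One-sided sup of `ω` over `U`:  `‖ω|_U = sup_{x ∈ U} max (ω x) 0`. -/
noncomputable def osup (ω : H → ℝ) (U : Set H) : ℝ :=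
  sSup ((fun x => max (ω x) 0) '' U)
open scoped ENNReal

set_option linter.unusedSectionVars false
set_option linter.unusedVariables false
set_option maxHeartbeats 1000000

theorem subdiff_nonempty_aux (g : H → ℝ) (hg : ConvexOn ℝ univ g) (hgc : Continuous g) (x : H) :
    (subdiff g x).Nonempty := by
  set U : Set (H × ℝ) := {p | g p.1 < p.2} with hU
  have hUo : IsOpen U := isOpen_lt (hgc.comp continuous_fst) continuous_snd
  have hUc : Convex ℝ U := by
    intro p hp q hq a b ha hb hab
    simp only [hU, mem_setOf_eq] at hp hq ⊢
    have h1 : g (a • p + b • q).1 ≤ a * g p.1 + b * g q.1 := by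
      have := hg.2 (mem_univ p.1) (mem_univ q.1) ha hb hab
      simpa using this
    have h2 : a * g p.1 + b * g q.1 < a * p.2 + b * q.2 := by
      rcases eq_or_lt_of_le ha with ha' | ha'
      · have hb' : b = 1 := by linarith
        simp [← ha', hb', hq]
      · rcases eq_or_lt_of_le hb with hb' | hb'
        · simp [← hb', mul_lt_mul_of_pos_left hp ha']
        · exact add_lt_add (mul_lt_mul_of_pos_left hp ha') (mul_lt_mul_of_pos_left hq hb')
    calc g (a • p + b • q).1 ≤ a * g p.1 + b * g q.1 := h1
    _ < a * p.2 + b * q.2 := h2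
    _ = (a • p + b • q).2 := by simp
  have hdisj : Disjoint U {((x, g x) : H × ℝ)} := by
    simp only [disjoint_singleton_right, hU, mem_setOf_eq]
    exact lt_irrefl _
  obtain ⟨φ, u, hUlt, hle⟩ := geometric_hahn_banach_open hUc hUo (convex_singleton _) hdisj
  have hxu : u ≤ φ (x, g x) := hle _ rfl
  set c : ℝ := φ (0, 1) with hc
  have hkey : ∀ y : H, ∀ ε > (0:ℝ), φ (y, g y) + ε * c < u := by
    intro y ε hε
    have hmem : ((y, g y + ε) : H × ℝ) ∈ U := by simp [hU, hε]
    have := hUlt _ hmem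
    have heq : ((y, g y + ε) : H × ℝ) = (y, g y) + ε • ((0:H), (1:ℝ)) := by
      simp [Prod.ext_iff]
    rw [heq, map_add] at this
    rw [φ.map_smul, smul_eq_mul] at this
    exact this
  have hclt : c < 0 := by
    have h1 := hkey x 1 one_pos
    nlinarith [hxu]
  have hkey2 : ∀ y : H, φ (y, g y) ≤ φ (x, g x) := by
    intro y
    have h1 : ∀ ε > (0:ℝ), φ (y, g y) + ε * c < φ (x, g x) :=
      fun ε hε => lt_of_lt_of_le (hkey y ε hε) hxu
    by_contra hcon
    push_neg at hcon
    have hd : 0 < φ (y, g y) - φ (x, g x) := by linarith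
    have hcpos : (0:ℝ) < -c := by linarith
    have := h1 ((φ (y, g y) - φ (x, g x)) / (-c)) (div_pos hd hcpos)
    have hcne : (c:ℝ) ≠ 0 := by linarith
    have he : (φ (y, g y) - φ (x, g x)) / (-c) * c = -(φ (y, g y) - φ (x, g x)) := by
      field_simp
    linarith
  refine ⟨(InnerProductSpace.toDual ℝ H).symm ((-c)⁻¹ • (φ.comp (ContinuousLinearMap.inl ℝ H ℝ))), ?_⟩
  intro y
  rw [InnerProductSpace.toDual_symm_apply]
  have h2 := hkey2 y
  have hy : φ (y, g y) = φ (y, 0) + g y * c := by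
    have : ((y, g y) : H × ℝ) = (y, 0) + (g y) • ((0:H), (1:ℝ)) := by simp [Prod.ext_iff]
    rw [this, map_add, φ.map_smul, smul_eq_mul]
  have hx : φ (x, g x) = φ (x, 0) + g x * c := by
    have : ((x, g x) : H × ℝ) = (x, 0) + (g x) • ((0:H), (1:ℝ)) := by simp [Prod.ext_iff]
    rw [this, map_add, φ.map_smul, smul_eq_mul]
  have happ : (φ.comp (ContinuousLinearMap.inl ℝ H ℝ)) (y - x) = φ (y, 0) - φ (x, 0) := by
    simp [ContinuousLinearMap.comp_apply, ContinuousLinearMap.inl_apply]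
    rw [show ((y - x, 0) : H × ℝ) = (y, 0) - (x, 0) by simp [Prod.ext_iff], map_sub]
  simp only [ContinuousLinearMap.coe_smul', Pi.smul_apply, smul_eq_mul, happ]
  have hcpos : 0 < -c := by linarith
  have hcne : (c:ℝ) ≠ 0 := by linarith
  have h3 : φ (y, 0) - φ (x, 0) ≤ (g x - g y) * c := by linarith
  have h4 : (-c)⁻¹ * (φ (y, 0) - φ (x, 0)) ≤ (-c)⁻¹ * ((g x - g y) * c) :=
    mul_le_mul_of_nonneg_left h3 (by positivity)
  have h5 : (-c)⁻¹ * ((g x - g y) * c) = g y - g x := by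
    field_simp
    ring
  linarith

theorem deriv_comp_eq_inner_aux {θ : H → ℝ} {γ : ℝ → H} {t : ℝ} {d v : H}
    (hγ : HasDerivAt γ d t) (hv : v ∈ subdiff θ (γ t))
    (hd : DifferentiableAt ℝ (fun s => θ (γ s)) t) :
    deriv (fun s => θ (γ s)) t = ⟪v, d⟫ := by
  have hinner : HasDerivAt (fun s => ⟪v, γ s⟫) ⟪v, d⟫ t := by
    have h0 : HasDerivAt (fun _ : ℝ => v) 0 t := hasDerivAt_const _ _
    have := h0.inner ℝ hγ
    simpa using this
  set ψ : ℝ → ℝ := fun s => θ (γ s) - (⟪v, γ s⟫ - ⟪v, γ t⟫) - θ (γ t) with hψ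
  have hψd : HasDerivAt ψ (deriv (fun s => θ (γ s)) t - ⟪v, d⟫) t := by
    have h1 : HasDerivAt (fun s => θ (γ s)) (deriv (fun s => θ (γ s)) t) t := hd.hasDerivAt
    have h2 : HasDerivAt (fun s => ⟪v, γ s⟫ - ⟪v, γ t⟫) ⟪v, d⟫ t := hinner.sub_const _
    exact (h1.sub h2).sub_const _
  have hmin : IsLocalMin ψ t := by
    apply Filter.Eventually.of_forall
    intro s
    have := hv (γ s)
    simp only [hψ]
    have hir : ⟪v, γ s - γ t⟫ = ⟪v, γ s⟫ - ⟪v, γ t⟫ := inner_sub_right v _ _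
    rw [hir] at this
    simp only [sub_self]
    linarith
  have := hmin.hasDerivAt_eq_zero hψd
  linarith

theorem lipschitz_on_compact_aux {θ : H → ℝ} (h : LocallyLipschitz θ) {K : Set H}
    (hK : IsCompact K) : ∃ L : ℝ, 0 ≤ L ∧ ∀ p ∈ K, ∀ q ∈ K, |θ p - θ q| ≤ L * ‖p - q‖ := by
  rcases K.eq_empty_or_nonempty with rfl | hKne
  · exact ⟨0, le_refl _, by simp⟩
  have h' : ∀ z : H, ∃ ε : ℝ, 0 < ε ∧ ∃ C : NNReal, LipschitzOnWith C θ (ball z ε) := by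
    intro z
    obtain ⟨C, t, ht, hL⟩ := h z
    obtain ⟨ε, hε, hsub⟩ := Metric.mem_nhds_iff.1 ht
    exact ⟨ε, hε, C, hL.mono hsub⟩
  choose ε hε C hC using fun z => h' z
  obtain ⟨s, hsK, hcover⟩ := hK.elim_nhds_subcover (fun z => ball z (ε z / 2))
    (fun z _ => ball_mem_nhds z (by have := hε z; positivity))
  have hsne : s.Nonempty := by
    by_contra hs
    rw [Finset.not_nonempty_iff_eq_empty] at hs
    obtain ⟨p, hp⟩ := hKne
    have := hcover hp
    simp [hs] at this
  obtain ⟨M, hM⟩ := hK.exists_bound_of_continuousOn h.continuous.continuousOn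
  have hM0 : 0 ≤ M := by
    obtain ⟨p, hp⟩ := hKne
    exact le_trans (norm_nonneg _) (hM p hp)
  set δ : ℝ := s.inf' hsne (fun z => ε z / 2) with hδ
  have hδ0 : 0 < δ := by
    rw [hδ, Finset.lt_inf'_iff]
    intro z _
    have := hε z
    positivity
  set Lm : ℝ := s.sup' hsne (fun z => (C z : ℝ)) with hLm
  refine ⟨max Lm (2 * M / δ), le_trans (by positivity) (le_max_right _ _), ?_⟩
  intro p hp q hq
  have hpc := hcover hp
  simp only [Finset.mem_coe, mem_iUnion, exists_prop] at hpc
  obtain ⟨z, hzs, hpz⟩ := hpc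
  rw [mem_ball] at hpz
  rcases lt_or_ge ‖p - q‖ (ε z / 2) with hlt | hge
  · have hpz' : p ∈ ball z (ε z) := by
      rw [mem_ball]
      have := hε z
      linarith
    have hqz' : q ∈ ball z (ε z) := by
      rw [mem_ball]
      have h3 : dist q z ≤ dist q p + dist p z := dist_triangle q p z
      rw [dist_comm q p, dist_eq_norm p q] at h3
      linarith
    have hd := (hC z).dist_le_mul p hpz' q hqz'
    rw [Real.dist_eq, dist_eq_norm] at hd
    calc |θ p - θ q| ≤ (C z : ℝ) * ‖p - q‖ := hd
    _ ≤ Lm * ‖p - q‖ := by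
        apply mul_le_mul_of_nonneg_right _ (norm_nonneg _)
        exact Finset.le_sup' (fun z => ((C z : ℝ))) hzs
    _ ≤ max Lm (2 * M / δ) * ‖p - q‖ :=
        mul_le_mul_of_nonneg_right (le_max_left _ _) (norm_nonneg _)
  · have hδle : δ ≤ ‖p - q‖ := le_trans (Finset.inf'_le _ hzs) hge
    have h2M : |θ p - θ q| ≤ 2 * M := by
      have h1 := hM p hp
      have h2 := hM q hq
      rw [Real.norm_eq_abs] at h1 h2
      calc |θ p - θ q| ≤ |θ p| + |θ q| := abs_sub _ _
      _ ≤ 2 * M := by linarith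
    calc |θ p - θ q| ≤ 2 * M := h2M
    _ = (2 * M / δ) * δ := by field_simp
    _ ≤ (2 * M / δ) * ‖p - q‖ := mul_le_mul_of_nonneg_left hδle (by positivity)
    _ ≤ max Lm (2 * M / δ) * ‖p - q‖ :=
        mul_le_mul_of_nonneg_right (le_max_right _ _) (norm_nonneg _)

theorem ae_diff_of_dominated_aux {h Φ : ℝ → ℝ} {a b K : ℝ} (hab : a < b) (hK : 0 ≤ K)
    (hΦ : MonotoneOn Φ (Icc a b))
    (hb : ∀ s ∈ Icc a b, ∀ t ∈ Icc a b, s ≤ t → |h t - h s| ≤ K * (Φ t - Φ s)) :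
    ∀ᵐ t ∂(volume.restrict (Ioo a b)), DifferentiableAt ℝ h t := by
  set c : ℝ → ℝ := fun s => max a (min s b) with hc
  have hcmono : Monotone c := fun s t hst =>
    max_le_max (le_refl a) (min_le_min hst (le_refl b))
  have hcmem : ∀ s, c s ∈ Icc a b := by
    intro s
    constructor
    · exact le_max_left _ _
    · exact max_le hab.le (min_le_right _ _)
  have hm1 : Monotone (fun s => h (c s) + K * Φ (c s)) := by
    intro s t hst
    have h1 := hb (c s) (hcmem s) (c t) (hcmem t) (hcmono hst)
    have h2 := abs_le.1 h1
    simp only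
    linarith [h2.1]
  have hm2 : Monotone (fun s => K * Φ (c s)) := by
    intro s t hst
    exact mul_le_mul_of_nonneg_left (hΦ (hcmem s) (hcmem t) (hcmono hst)) hK
  have hd1 := hm1.ae_differentiableAt
  have hd2 := hm2.ae_differentiableAt
  rw [ae_restrict_iff' measurableSet_Ioo]
  filter_upwards [hd1, hd2] with t h1 h2 ht
  have hdc : DifferentiableAt ℝ (fun s => h (c s)) t := by
    have hfun : (fun s => h (c s)) = (fun s => h (c s) + K * Φ (c s)) - (fun s => K * Φ (c s)) := by
      funext s
      simp only [Pi.sub_apply]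
      ring
    rw [hfun]
    exact h1.sub h2
  have heq : (fun s => h (c s)) =ᶠ[nhds t] h := by
    filter_upwards [Ioo_mem_nhds ht.1 ht.2] with s hs
    have : c s = s := by
      rw [hc]
      simp only [min_eq_left hs.2.le, max_eq_right hs.1.le]
    rw [this]
  exact (Filter.EventuallyEq.differentiableAt_iff heq).1 hdc

theorem integrableOn_of_AC_aux {γ γ' : ℝ → H} {b : ℝ} (hb : 0 < b)
    (hAC : ∀ a c : ℝ, 0 ≤ a → a ≤ c → c ≤ b → γ c - γ a = ∫ t in a..c, γ' t)
    (hder : ∀ᵐ t ∂(volume.restrict (Ioo 0 b)), HasDerivAt γ (γ' t) t) :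
    IntegrableOn γ' (Ioc 0 b) := by
  by_contra hni
  have hmono : ∀ {s u s' u' : ℝ}, s' ≤ s → u ≤ u' → ¬ IntegrableOn γ' (Ioc s u) →
      ¬ IntegrableOn γ' (Ioc s' u') := fun hs hu hn h => hn (h.mono_set (Ioc_subset_Ioc hs hu))
  have hunion : ∀ {s u w : ℝ}, s ≤ u → u ≤ w → IntegrableOn γ' (Ioc s u) →
      IntegrableOn γ' (Ioc u w) → IntegrableOn γ' (Ioc s w) := by
    intro s u w h1 h2 i1 i2
    have h3 := i1.union i2
    rwa [Ioc_union_Ioc_eq_Ioc h1 h2] at h3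
  have hzero : ∀ {s u : ℝ}, 0 ≤ s → s ≤ u → u ≤ b → ¬ IntegrableOn γ' (Ioc s u) → γ u = γ s := by
    intro s u h0 hsu hub hn
    have h1 := hAC s u h0 hsu hub
    rw [intervalIntegral.integral_undef] at h1
    · exact sub_eq_zero.1 h1
    · rw [intervalIntegrable_iff_integrableOn_Ioc_of_le hsu]; exact hn
  set S : Set ℝ := {t | t ∈ Icc 0 b ∧ IntegrableOn γ' (Ioc t b)} with hS
  have hbS : b ∈ S := ⟨⟨hb.le, le_refl b⟩, by simp⟩
  have hSne : S.Nonempty := ⟨b, hbS⟩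
  have hSbdd : BddBelow S := ⟨0, fun t ht => ht.1.1⟩
  set m := sInf S with hm
  have hm0 : 0 ≤ m := le_csInf hSne (fun t ht => ht.1.1)
  have hmb : m ≤ b := csInf_le hSbdd hbS
  have hconst : ∀ w ∈ Icc 0 b, γ w = γ 0 := by
    by_cases hmS : IntegrableOn γ' (Ioc m b)
    · have hmpos : 0 < m := by
        rcases eq_or_lt_of_le hm0 with h | h
        · exact absurd (h ▸ hmS) hni
        · exact h
      have hni2 : ∀ t, 0 ≤ t → t < m → ¬ IntegrableOn γ' (Ioc t m) := by
        intro t h0 htm hint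
        have htS : t ∈ S := ⟨⟨h0, le_trans htm.le hmb⟩, hunion htm.le hmb hint hmS⟩
        exact absurd (csInf_le hSbdd htS) (not_le.2 htm)
      have hflat : ∀ t, 0 ≤ t → t < m → ∀ u, m ≤ u → u ≤ b → γ u = γ t := by
        intro t h0 htm u hmu hub
        exact hzero h0 (le_trans htm.le hmu) hub
          (hmono (le_refl t) hmu (hni2 t h0 htm))
      intro w hw
      rcases lt_or_ge w m with hwm | hwm
      · have h1 : γ m = γ w := hflat w hw.1 hwm m (le_refl m) hmb
        have h2 : γ m = γ 0 := hflat 0 (le_refl 0) hmpos m (le_refl m) hmb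
        rw [← h1, h2]
      · exact hflat 0 (le_refl 0) hmpos w hwm hw.2
    · have hmltb : m < b := by
        rcases eq_or_lt_of_le hmb with h | h
        · exfalso; apply hmS; rw [h]; simp
        · exact h
      have hgt : ∀ u, m < u → u ≤ b → IntegrableOn γ' (Ioc u b) := by
        intro u hmu hub
        obtain ⟨t, htS, htu⟩ := (csInf_lt_iff hSbdd hSne).1 hmu
        exact htS.2.mono_set (Ioc_subset_Ioc htu.le (le_refl b))
      have hni2 : ∀ u, m < u → u ≤ b → ¬ IntegrableOn γ' (Ioc m u) := by
        intro u hmu hub hint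
        exact hmS (hunion hmu.le hub hint (hgt u hmu hub))
      have hflat : ∀ t, 0 ≤ t → t ≤ m → ∀ u, m < u → u ≤ b → γ u = γ t := by
        intro t h0 htm u hmu hub
        exact hzero h0 (le_trans htm hmu.le) hub
          (hmono htm (le_refl u) (hni2 u hmu hub))
      intro w hw
      rcases le_or_gt w m with hwm | hwm
      · have h1 : γ b = γ w := hflat w hw.1 hwm b hmltb (le_refl b)
        have h2 : γ b = γ 0 := hflat 0 (le_refl 0) hm0 b hmltb (le_refl b)
        rw [← h1, h2]
      · exact hflat 0 (le_refl 0) hm0 w hwm hw.2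
  have hg0 : ∀ᵐ t ∂(volume.restrict (Ioo 0 b)), γ' t = 0 := by
    filter_upwards [hder, ae_restrict_mem measurableSet_Ioo] with t ht hIoo
    have hev : γ =ᶠ[nhds t] (fun _ => γ 0) := by
      filter_upwards [Ioo_mem_nhds hIoo.1 hIoo.2] with s hs
      exact hconst s ⟨hs.1.le, hs.2.le⟩
    have h2 : HasDerivAt (fun _ : ℝ => γ 0) (γ' t) t := ht.congr_of_eventuallyEq hev.symm
    exact h2.unique (hasDerivAt_const t (γ 0))
  have hint0 : IntegrableOn γ' (Ioo 0 b) :=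
    (integrable_zero _ _ _).congr (by filter_upwards [hg0] with t ht; rw [ht]; rfl)
  apply hni
  unfold IntegrableOn at hint0 ⊢
  rwa [Measure.restrict_congr_set Ioo_ae_eq_Ioc] at hint0

theorem derivative_of_difference_along_subgradient_curve
    (f g : H → ℝ)
    (hf : ConvexOn ℝ univ f) (hfc : Continuous f)
    (hg : ConvexOn ℝ univ g) (hgc : Continuous g)
    (hCf : (argminSet f).Nonempty)
    (x : H) (Tmax : ℝ≥0∞) (hTmax : 0 < Tmax)
    (γ γ' : ℝ → H)
    (hγ0 : γ 0 = x)
    -- γ is a solution of the subgradient system on [0, Tmax):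
    (hderiv : ∀ᵐ t ∂(volume.restrict {t : ℝ | 0 ≤ t ∧ ENNReal.ofReal t < Tmax}),
      HasDerivAt γ (γ' t) t ∧ -γ' t ∈ subdiff f (γ t))
    -- γ is absolutely continuous (it is the integral of its derivative):
    (hAC : ∀ a b : ℝ, 0 ≤ a → a ≤ b → ENNReal.ofReal b < Tmax →
      γ b - γ a = ∫ t in a..b, γ' t) :
    ∀ᵐ t ∂(volume.restrict {t : ℝ | 0 ≤ t ∧ ENNReal.ofReal t < Tmax}),
      ∃ a' : ℝ, HasDerivAt (fun s => f (γ s) - g (γ s)) a' t ∧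
        a' ≤ (slopeFn g (γ t) - slopeFn f (γ t)) * slopeFn f (γ t) := by
  classical
  set R : Set ℝ := {t : ℝ | 0 ≤ t ∧ ENNReal.ofReal t < Tmax} with hRdef
  set P : ℝ → Prop := fun t => ∃ a' : ℝ, HasDerivAt (fun s => f (γ s) - g (γ s)) a' t ∧
        a' ≤ (slopeFn g (γ t) - slopeFn f (γ t)) * slopeFn f (γ t) with hPdef
  -- local Lipschitzness of f and g
  have hfLL : LocallyLipschitz f :=
    locallyLipschitzOn_univ.1 ((hf.locallyLipschitzOn_iff_continuousOn isOpen_univ).2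
      hfc.continuousOn)
  have hgLL : LocallyLipschitz g :=
    locallyLipschitzOn_univ.1 ((hg.locallyLipschitzOn_iff_continuousOn isOpen_univ).2
      hgc.continuousOn)
  have key : ∀ b : ℝ, 0 < b → ENNReal.ofReal b < Tmax →
      ∀ᵐ t ∂(volume.restrict (Ioo 0 b)), P t := by
    intro b hb0 hbT
    have hsubR : Ioo 0 b ⊆ R := fun t ht =>
      ⟨ht.1.le, lt_of_le_of_lt (ENNReal.ofReal_le_ofReal ht.2.le) hbT⟩
    have hsubR' : Ioc 0 b ⊆ R := fun t ht =>
      ⟨ht.1.le, lt_of_le_of_lt (ENNReal.ofReal_le_ofReal ht.2) hbT⟩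
    have hder2 : ∀ᵐ t ∂(volume.restrict (Ioo 0 b)),
        HasDerivAt γ (γ' t) t ∧ -γ' t ∈ subdiff f (γ t) :=
      ae_restrict_of_ae_restrict_of_subset hsubR hderiv
    have hAC2 : ∀ a c : ℝ, 0 ≤ a → a ≤ c → c ≤ b → γ c - γ a = ∫ t in a..c, γ' t :=
      fun a c h0 hac hcb =>
        hAC a c h0 hac (lt_of_le_of_lt (ENNReal.ofReal_le_ofReal hcb) hbT)
    have hIntIoc : IntegrableOn γ' (Ioc 0 b) :=
      integrableOn_of_AC_aux hb0 hAC2 (hder2.mono fun t ht => ht.1)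
    have hII : ∀ {s u : ℝ}, 0 ≤ s → s ≤ u → u ≤ b → IntervalIntegrable γ' volume s u := by
      intro s u h0 hsu hub
      rw [intervalIntegrable_iff_integrableOn_Ioc_of_le hsu]
      exact hIntIoc.mono_set (Ioc_subset_Ioc h0 hub)
    set Φ : ℝ → ℝ := fun t => ∫ s in (0:ℝ)..t, ‖γ' s‖ with hΦdef
    have hΦadd : ∀ {s u : ℝ}, 0 ≤ s → s ≤ u → u ≤ b → Φ u - Φ s = ∫ r in s..u, ‖γ' r‖ := by
      intro s u h0 hsu hub
      have h1 := intervalIntegral.integral_add_adjacent_intervals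
        ((hII (le_refl 0) h0 (le_trans hsu hub)).norm) ((hII h0 hsu hub).norm)
      simp only [hΦdef]
      linarith [h1]
    have hΦmono : MonotoneOn Φ (Icc 0 b) := by
      intro s hs u hu hsu
      have h1 := hΦadd hs.1 hsu hu.2
      have h2 : 0 ≤ ∫ r in s..u, ‖γ' r‖ :=
        intervalIntegral.integral_nonneg hsu (fun r _ => norm_nonneg _)
      linarith
    have hγdiff : ∀ s ∈ Icc 0 b, ∀ u ∈ Icc 0 b, s ≤ u → ‖γ u - γ s‖ ≤ Φ u - Φ s := by
      intro s hs u hu hsu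
      rw [hAC2 s u hs.1 hsu hu.2, hΦadd hs.1 hsu hu.2]
      exact intervalIntegral.norm_integral_le_integral_norm hsu
    have hcont : ContinuousOn γ (Icc 0 b) := by
      have hIcc : IntegrableOn γ' (uIcc 0 b) := by
        rw [uIcc_of_le hb0.le]
        unfold IntegrableOn at hIntIoc ⊢
        rwa [Measure.restrict_congr_set Ioc_ae_eq_Icc] at hIntIoc
      have h1 := intervalIntegral.continuousOn_primitive_interval hIcc
      rw [uIcc_of_le hb0.le] at h1
      have h2 : ContinuousOn (fun u => γ 0 + ∫ t in (0:ℝ)..u, γ' t) (Icc 0 b) :=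
        continuousOn_const.add h1
      apply h2.congr
      intro u hu
      have h3 := hAC2 0 u (le_refl 0) hu.1 hu.2
      simp only
      rw [← h3]
      abel
    have hKc : IsCompact (γ '' Icc 0 b) := isCompact_Icc.image_of_continuousOn hcont
    obtain ⟨Lf, hLf0, hLf⟩ := lipschitz_on_compact_aux hfLL hKc
    obtain ⟨Lg, hLg0, hLg⟩ := lipschitz_on_compact_aux hgLL hKc
    have hDf : ∀ᵐ t ∂(volume.restrict (Ioo 0 b)), DifferentiableAt ℝ (fun s => f (γ s)) t := by
      apply ae_diff_of_dominated_aux hb0 hLf0 hΦmono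
      intro s hs t ht hst
      calc |f (γ t) - f (γ s)| ≤ Lf * ‖γ t - γ s‖ :=
            hLf _ (mem_image_of_mem _ ht) _ (mem_image_of_mem _ hs)
      _ ≤ Lf * (Φ t - Φ s) := mul_le_mul_of_nonneg_left (hγdiff s hs t ht hst) hLf0
    have hDg : ∀ᵐ t ∂(volume.restrict (Ioo 0 b)), DifferentiableAt ℝ (fun s => g (γ s)) t := by
      apply ae_diff_of_dominated_aux hb0 hLg0 hΦmono
      intro s hs t ht hst
      calc |g (γ t) - g (γ s)| ≤ Lg * ‖γ t - γ s‖ :=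
            hLg _ (mem_image_of_mem _ ht) _ (mem_image_of_mem _ hs)
      _ ≤ Lg * (Φ t - Φ s) := mul_le_mul_of_nonneg_left (hγdiff s hs t ht hst) hLg0
    -- final pointwise argument
    filter_upwards [hder2, hDf, hDg] with t ht hdf hdg
    obtain ⟨hdt, hsubt⟩ := ht
    have hEf : deriv (fun s => f (γ s)) t = -‖γ' t‖^2 := by
      rw [deriv_comp_eq_inner_aux hdt hsubt hdf, inner_neg_left, real_inner_self_eq_norm_sq]
    have hfub : slopeFn f (γ t) ≤ ‖γ' t‖ := by
      have h1 := infDist_le_dist_of_mem (x := (0:H)) hsubt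
      rwa [dist_zero_left, norm_neg] at h1
    have hflb : ‖γ' t‖ ≤ slopeFn f (γ t) := by
      by_cases hd0 : γ' t = 0
      · rw [hd0, norm_zero]
        exact infDist_nonneg
      · have hpos : 0 < ‖γ' t‖ := norm_pos_iff.2 hd0
        rw [slopeFn, infDist_eq_iInf]
        have hne : Nonempty (subdiff f (γ t)) := ⟨⟨-γ' t, hsubt⟩⟩
        apply le_ciInf
        intro w
        have h1 := deriv_comp_eq_inner_aux hdt w.2 hdf
        rw [hEf] at h1
        have h2 := abs_real_inner_le_norm (w : H) (γ' t)
        rw [dist_zero_left]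
        nlinarith [abs_le.1 h2]
    have hsf : slopeFn f (γ t) = ‖γ' t‖ := le_antisymm hfub hflb
    obtain ⟨w0, hw0⟩ := subdiff_nonempty_aux g hg hgc (γ t)
    refine ⟨deriv (fun s => f (γ s)) t - deriv (fun s => g (γ s)) t,
      hdf.hasDerivAt.sub hdg.hasDerivAt, ?_⟩
    rw [hsf, hEf]
    by_cases hd0 : γ' t = 0
    · rw [deriv_comp_eq_inner_aux hdt hw0 hdg, hd0]
      simp
    · have hpos : 0 < ‖γ' t‖ := norm_pos_iff.2 hd0
      have hgi : -(deriv (fun s => g (γ s)) t) / ‖γ' t‖ ≤ slopeFn g (γ t) := by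
        rw [slopeFn, infDist_eq_iInf]
        have hne : Nonempty (subdiff g (γ t)) := ⟨⟨w0, hw0⟩⟩
        apply le_ciInf
        intro w
        rw [div_le_iff₀ hpos, dist_zero_left]
        have h1 := deriv_comp_eq_inner_aux hdt w.2 hdg
        have h2 := abs_real_inner_le_norm (w : H) (γ' t)
        nlinarith [abs_le.1 h2]
      rw [div_le_iff₀ hpos] at hgi
      nlinarith [hgi]
  -- assembly
  have hRm : MeasurableSet R := by
    have hReq : R = Ici 0 ∩ ENNReal.ofReal ⁻¹' (Iio Tmax) := by
      ext t; simp [hRdef]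
    rw [hReq]
    exact measurableSet_Ici.inter (ENNReal.measurable_ofReal measurableSet_Iio)
  rw [ae_restrict_iff' hRm]
  have hae_q : ∀ q : {q : ℚ // 0 < (q:ℝ) ∧ ENNReal.ofReal (q:ℝ) < Tmax},
      ∀ᵐ t ∂(volume : Measure ℝ), t ∈ Ioo 0 ((q : ℚ) : ℝ) → P t := fun q =>
    (ae_restrict_iff' measurableSet_Ioo).1 (key q q.2.1 q.2.2)
  have hne0 : ∀ᵐ t ∂(volume : Measure ℝ), t ≠ 0 := by
    rw [ae_iff]
    have : {t : ℝ | ¬ t ≠ 0} = {0} := by ext t; simp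
    rw [this]
    exact Real.volume_singleton
  filter_upwards [ae_all_iff.2 hae_q, hne0] with t hq ht0 htR
  have htpos : 0 < t := lt_of_le_of_ne htR.1 (Ne.symm ht0)
  rcases eq_top_or_lt_top Tmax with hT | hT
  · obtain ⟨q, htq⟩ := exists_rat_gt t
    exact hq ⟨q, ⟨lt_trans htpos htq, by rw [hT]; exact ENNReal.ofReal_lt_top⟩⟩ ⟨htpos, htq⟩
  · have htT : t < Tmax.toReal := by
      have h2 := htR.2
      rwa [ENNReal.ofReal_lt_iff_lt_toReal htR.1 hT.ne] at h2
    obtain ⟨q, hq1, hq2⟩ := exists_rat_btwn htT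
    refine hq ⟨q, ⟨lt_trans htpos hq1, ?_⟩⟩ ⟨htpos, hq1⟩
    rw [ENNReal.ofReal_lt_iff_lt_toReal (le_trans htpos.le hq1.le) hT.ne]
    exact hq2
end

section
/- Let f, g : H → ℝ be convex continuous functions on a real Hilbert space H with C_f := argmin f and C_g := argmin g both nonempty and bounded. If s_f(x) = s_g(x) for every x ∈ H and f(x) = g(x) for every x ∈ C_f ∪ C_g, then f = g on all of H. -/
open Set Metric MeasureTheory Filter Bornology RealInnerProductSpace

variable {H : Type*} [NormedAddCommGroup H] [InnerProductSpace ℝ H] [CompleteSpace H]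

set_option linter.unusedSectionVars false
set_option maxHeartbeats 1000000

/-! ### Auxiliary real lemmas -/

lemma le_add_eps' {c a : ℝ} (h : ∀ ε : ℝ, 0 < ε → c ≤ a + ε) : c ≤ a := by
  by_contra hc; push_neg at hc
  have := h ((c - a) / 2) (by linarith)
  linarith

lemma le_of_forall_small' {a b c : ℝ} (h : ∀ t : ℝ, 0 < t → t ≤ 1 → c ≤ a + t * b) : c ≤ a := by
  apply le_add_eps'
  intro ε hε
  rcases le_or_gt b 0 with hb | hb
  · have := h 1 one_pos le_rfl; nlinarith
  · have ht0 : 0 < min 1 (ε / b) := lt_min one_pos (by positivity)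
    have := h _ ht0 (min_le_left _ _)
    have h2 : min 1 (ε / b) * b ≤ (ε / b) * b :=
      mul_le_mul_of_nonneg_right (min_le_right _ _) hb.le
    have h3 : (ε / b) * b = ε := by field_simp
    linarith

/-! ### Basic facts about subdifferentials and slopes -/

lemma subdiff_closed (f : H → ℝ) (x : H) : IsClosed (subdiff f x) := by
  have : subdiff f x = ⋂ y, {v : H | f x + ⟪v, y - x⟫ ≤ f y} := by
    ext v; simp [subdiff, Set.mem_iInter]
  rw [this]
  exact isClosed_iInter fun y =>
    isClosed_le (continuous_const.add (continuous_id.inner continuous_const)) continuous_const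

lemma slopeFn_nonneg (f : H → ℝ) (x : H) : 0 ≤ slopeFn f x := Metric.infDist_nonneg

lemma slopeFn_le_norm {f : H → ℝ} {x v : H} (hv : v ∈ subdiff f x) : slopeFn f x ≤ ‖v‖ := by
  simpa [slopeFn, dist_zero_left] using Metric.infDist_le_dist_of_mem (x := (0 : H)) hv

lemma le_slopeFn {f : H → ℝ} {x : H} {c : ℝ} (hne : (subdiff f x).Nonempty)
    (h : ∀ v ∈ subdiff f x, c ≤ ‖v‖) : c ≤ slopeFn f x := by
  have : Nonempty (subdiff f x) := hne.to_subtype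
  rw [slopeFn, Metric.infDist_eq_iInf]
  exact le_ciInf fun v => by simpa [dist_zero_left] using h v v.2

/-- Nonemptiness of the subdifferential of a continuous convex function (Hahn–Banach). -/
lemma subdiff_nonempty (f : H → ℝ) (hf : ConvexOn ℝ univ f) (hfc : Continuous f) (x : H) :
    (subdiff f x).Nonempty := by
  have hset : {p : H × ℝ | f p.1 < p.2} = {p : H × ℝ | p.1 ∈ univ ∧ f p.1 < p.2} := by
    ext p; simp
  have ht₁ : Convex ℝ {p : H × ℝ | f p.1 < p.2} := by
    rw [hset]; exact hf.convex_strict_epigraph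
  have ht₂ : IsOpen {p : H × ℝ | f p.1 < p.2} :=
    isOpen_lt (hfc.comp continuous_fst) continuous_snd
  have hx : (x, f x) ∉ {p : H × ℝ | f p.1 < p.2} := by simp
  obtain ⟨ℓ, hℓ⟩ := geometric_hahn_banach_point_open ht₁ ht₂ hx
  set a : ℝ := ℓ (0, 1) with ha_def
  have hdecomp : ∀ (y : H) (s : ℝ), ℓ (y, s) = ℓ (y, 0) + s * a := by
    intro y s
    have h1 : (y, s) = (y, (0:ℝ)) + s • ((0:H), (1:ℝ)) := by
      simp [Prod.ext_iff]
    rw [h1, map_add, ℓ.map_smul, smul_eq_mul]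
  have ha : 0 < a := by
    have h1 := hℓ (x, f x + 1) (by simp)
    rw [hdecomp x (f x + 1), hdecomp x (f x)] at h1
    linarith
  have key : ∀ y : H, ℓ (x, 0) + f x * a ≤ ℓ (y, 0) + f y * a := by
    intro y
    by_contra h
    push_neg at h
    have h2 := hℓ (y, f y + (ℓ (x,0) + f x * a - (ℓ (y,0) + f y * a)) / (2*a))
      (by simp only [Set.mem_setOf_eq]
          have : 0 < (ℓ (x,0) + f x * a - (ℓ (y,0) + f y * a)) / (2*a) :=
            div_pos (by linarith) (by linarith)
          linarith)
    rw [hdecomp x (f x), hdecomp y _, add_mul] at h2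
    have h3 : (ℓ (x,0) + f x * a - (ℓ (y,0) + f y * a)) / (2*a) * a
        = (ℓ (x,0) + f x * a - (ℓ (y,0) + f y * a)) / 2 := by
      field_simp
    rw [h3] at h2
    linarith
  set φ : H →L[ℝ] ℝ := ℓ.comp (ContinuousLinearMap.inl ℝ H ℝ) with hφ
  have hφ_apply : ∀ z : H, φ z = ℓ (z, 0) := fun z => rfl
  set v : H := (InnerProductSpace.toDual ℝ H).symm ((-a⁻¹) • φ) with hv_def
  have hv : ∀ z : H, ⟪v, z⟫ = -a⁻¹ * ℓ (z, 0) := by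
    intro z
    rw [hv_def, InnerProductSpace.toDual_symm_apply]
    simp [hφ_apply]
  refine ⟨v, fun y => ?_⟩
  have h5 : ⟪v, y - x⟫ = -a⁻¹ * (ℓ (y, 0) - ℓ (x, 0)) := by
    rw [hv (y - x)]
    have : (y - x, (0:ℝ)) = (y, (0:ℝ)) - (x, 0) := by simp [Prod.ext_iff]
    rw [this, map_sub]
  rw [h5]
  have h6 := key y
  have h7 : a⁻¹ * (ℓ (x,0) + f x * a) ≤ a⁻¹ * (ℓ (y,0) + f y * a) :=
    mul_le_mul_of_nonneg_left h6 (by positivity)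
  have h9 : a⁻¹ * (ℓ (x,0) + f x * a) = a⁻¹ * ℓ (x,0) + f x := by
    field_simp
  have h10 : a⁻¹ * (ℓ (y,0) + f y * a) = a⁻¹ * ℓ (y,0) + f y := by
    field_simp
  rw [h9, h10] at h7
  linarith

lemma sub_le_slope_mul {f : H → ℝ} {x : H} (hne : (subdiff f x).Nonempty) (y : H) :
    f x - f y ≤ slopeFn f x * ‖x - y‖ := by
  rcases eq_or_ne x y with rfl | hxy
  · simp
  · have hn : 0 < ‖x - y‖ := by
      rw [norm_pos_iff, sub_ne_zero]; exact hxy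
    have h1 : (f x - f y) / ‖x - y‖ ≤ slopeFn f x := by
      apply le_slopeFn hne
      intro v hv
      have h2 := hv y
      have h4 : ⟪v, x - y⟫ = -⟪v, y - x⟫ := by
        rw [show x - y = -(y - x) by abel, inner_neg_right]
      have h3 : ⟪v, x - y⟫ ≤ ‖v‖ * ‖x - y‖ := real_inner_le_norm v (x - y)
      rw [div_le_iff₀ hn]
      linarith
    have := (div_le_iff₀ hn).mp h1
    linarith

lemma slope_zero_mem_argmin {g : H → ℝ} (hg : ConvexOn ℝ univ g) (hgc : Continuous g)
    {x : H} (h : slopeFn g x = 0) : x ∈ argminSet g := by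
  have hne := subdiff_nonempty g hg hgc x
  have hcl := subdiff_closed g x
  have h0 : (0 : H) ∈ subdiff g x := by
    rw [hcl.mem_iff_infDist_zero hne]
    exact h
  intro y
  have := h0 y
  simpa [inner_zero_left] using this

lemma slopeFn_eq_zero_of_argmin {f : H → ℝ} {x : H} (hx : x ∈ argminSet f) :
    slopeFn f x = 0 := by
  have h0 : (0 : H) ∈ subdiff f x := by
    intro y
    simpa [inner_zero_left] using hx y
  have h1 : slopeFn f x ≤ 0 := by simpa using slopeFn_le_norm h0
  exact le_antisymm h1 (slopeFn_nonneg f x)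

/-! ### Existence of proximal points -/

lemma exists_prox (g : H → ℝ) (hg : ConvexOn ℝ univ g) (hgc : Continuous g)
    {m : ℝ} (hm : ∀ y, m ≤ g y) (lam : ℝ) (hlam : 0 < lam) (q : H) :
    ∃ p : H, ∀ y, g p + ‖p - q‖ ^ 2 / (2 * lam) ≤ g y + ‖y - q‖ ^ 2 / (2 * lam) := by
  set h : H → ℝ := fun y => g y + ‖y - q‖ ^ 2 / (2 * lam) with hh
  have hcont : Continuous h := by
    apply hgc.add
    have h1 : Continuous fun y : H => ‖y - q‖ := (continuous_id.sub continuous_const).norm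
    continuity
  have hbdd : BddBelow (range h) := by
    refine ⟨m, fun r hr => ?_⟩
    obtain ⟨y, rfl⟩ := hr
    have h1 : (0:ℝ) ≤ ‖y - q‖ ^ 2 / (2 * lam) := by positivity
    have h2 := hm y
    simp only [hh]
    linarith
  set c : ℝ := sInf (range h) with hc
  have hc_le : ∀ y, c ≤ h y := fun y => csInf_le hbdd (mem_range_self y)
  have hmid : ∀ y z : H, h ((1/2 : ℝ) • y + (1/2 : ℝ) • z)
      ≤ (h y + h z) / 2 - ‖y - z‖ ^ 2 / (8 * lam) := by
    intro y z
    have hgm : g ((1/2 : ℝ) • y + (1/2 : ℝ) • z) ≤ (1/2) * g y + (1/2) * g z :=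
      hg.2 (mem_univ y) (mem_univ z) (by norm_num) (by norm_num) (by norm_num)
    have hid : (1/2 : ℝ) • y + (1/2 : ℝ) • z - q = (1/2 : ℝ) • ((y - q) + (z - q)) := by
      module
    have hpar := parallelogram_law_with_norm ℝ (y - q) (z - q)
    have hpar2 : ‖(y - q) + (z - q)‖^2 + ‖(y - q) - (z - q)‖^2
        = 2*(‖y - q‖^2 + ‖z - q‖^2) := by
      simpa [pow_two] using hpar
    have huw : (y - q) - (z - q) = y - z := by abel
    rw [huw] at hpar2
    have hq : ‖(y - q) + (z - q)‖^2 = 2*(‖y - q‖^2 + ‖z - q‖^2) - ‖y - z‖^2 := by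
      linarith
    have hnorm : ‖(1/2 : ℝ) • ((y - q) + (z - q))‖ ^ 2 = ‖(y - q) + (z - q)‖ ^ 2 / 4 := by
      rw [norm_smul, mul_pow]
      norm_num
      ring
    simp only [hh, hid]
    rw [hnorm, hq]
    have hqq : (2*(‖y - q‖^2 + ‖z - q‖^2) - ‖y - z‖^2)/4/(2*lam)
        = (‖y - q‖^2/(2*lam) + ‖z - q‖^2/(2*lam) )/2 - ‖y - z‖^2/(8*lam) := by
      field_simp
      ring
    rw [hqq]
    linarith
  have hseq : ∀ n : ℕ, ∃ y : H, h y < c + (1/2) ^ n := by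
    intro n
    obtain ⟨r, hr, hlt⟩ := Real.lt_sInf_add_pos (range_nonempty h)
      (by positivity : (0:ℝ) < (1/2:ℝ)^n)
    obtain ⟨y, rfl⟩ := hr
    exact ⟨y, hlt⟩
  choose u hu using hseq
  have hdist : ∀ n k N : ℕ, N ≤ n → N ≤ k →
      dist (u n) (u k) ≤ Real.sqrt (8 * lam * (1/2)^N) := by
    intro n k N hn hk
    have hpow1 : ((1:ℝ)/2)^n ≤ (1/2)^N := pow_le_pow_of_le_one (by norm_num) (by norm_num) hn
    have hpow2 : ((1:ℝ)/2)^k ≤ (1/2)^N := pow_le_pow_of_le_one (by norm_num) (by norm_num) hk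
    have h1 : h (u n) < c + (1/2)^N := lt_of_lt_of_le (hu n) (by linarith)
    have h2 : h (u k) < c + (1/2)^N := lt_of_lt_of_le (hu k) (by linarith)
    have h3 := hmid (u n) (u k)
    have h4 := hc_le ((1/2 : ℝ) • u n + (1/2 : ℝ) • u k)
    have h5 : ‖u n - u k‖^2/(8*lam) ≤ (1/2:ℝ)^N := by linarith
    have h6 : ‖u n - u k‖^2 ≤ 8 * lam * (1/2)^N := by
      have := mul_le_mul_of_nonneg_right h5 (le_of_lt (by positivity : (0:ℝ) < 8*lam))
      rw [div_mul_eq_mul_div, mul_div_assoc] at this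
      rw [div_self (by positivity : (8*lam : ℝ) ≠ 0), mul_one] at this
      linarith [this]
    rw [dist_eq_norm]
    rw [show ‖u n - u k‖ = Real.sqrt (‖u n - u k‖^2) from (Real.sqrt_sq (norm_nonneg _)).symm]
    exact Real.sqrt_le_sqrt h6
  have hb0 : Tendsto (fun N : ℕ => Real.sqrt (8 * lam * (1/2)^N)) atTop (nhds 0) := by
    have h1 : Tendsto (fun N : ℕ => 8 * lam * (1/2:ℝ)^N) atTop (nhds 0) := by
      have h0 := tendsto_pow_atTop_nhds_zero_of_lt_one
        (by norm_num : (0:ℝ) ≤ 1/2) (by norm_num : (1/2:ℝ) < 1)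
      simpa using h0.const_mul (8*lam)
    have h2 := (Real.continuous_sqrt.tendsto 0).comp h1
    simpa only [Function.comp_def, Real.sqrt_zero] using h2
  have hcauchy : CauchySeq u := cauchySeq_of_le_tendsto_0 _ hdist hb0
  obtain ⟨p, hp⟩ := cauchySeq_tendsto_of_complete hcauchy
  refine ⟨p, fun y => ?_⟩
  have hhp : Tendsto (fun n => h (u n)) atTop (nhds (h p)) := (hcont.tendsto p).comp hp
  have hcp : h p ≤ c := by
    have h2 : Tendsto (fun n : ℕ => c + (1/2:ℝ)^n) atTop (nhds c) := by
      have h0 := tendsto_pow_atTop_nhds_zero_of_lt_one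
        (by norm_num : (0:ℝ) ≤ 1/2) (by norm_num : (1/2:ℝ) < 1)
      simpa using tendsto_const_nhds.add h0
    exact le_of_tendsto_of_tendsto' hhp h2 (fun n => (hu n).le)
  exact le_trans (le_trans hcp (hc_le y)) le_rfl

lemma prox_subdiff (g : H → ℝ) (hg : ConvexOn ℝ univ g) {lam : ℝ} (hlam : 0 < lam) {q p : H}
    (hp : ∀ y, g p + ‖p - q‖ ^ 2 / (2*lam) ≤ g y + ‖y - q‖ ^ 2 / (2*lam)) :
    lam⁻¹ • (q - p) ∈ subdiff g p := by
  intro y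
  have concl : 2*lam*(g p) ≤ 2*lam*(g y) + 2*⟪p - q, y - p⟫ := by
    have main : ∀ t : ℝ, 0 < t → t ≤ 1 →
        2*lam*(g p) ≤ (2*lam*(g y) + 2*⟪p - q, y - p⟫) + t * ‖y - p‖^2 := by
      intro t ht ht1
      set z := (1-t) • p + t • y with hz
      have hcvx : g z ≤ (1-t) * g p + t * g y :=
        hg.2 (mem_univ p) (mem_univ y) (by linarith) ht.le (by ring)
      have hid : z - q = (p - q) + t • (y - p) := by rw [hz]; module
      have hexp : ‖z - q‖^2
          = ‖p - q‖^2 + 2 * (t * ⟪p - q, y - p⟫) + t^2 * ‖y - p‖^2 := by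
        rw [hid, norm_add_sq_real, real_inner_smul_right, norm_smul,
          Real.norm_eq_abs, abs_of_pos ht, mul_pow]
      have e1 := mul_le_mul_of_nonneg_right (hp z) (by positivity : (0:ℝ) ≤ 2*lam)
      have e2 : (g p + ‖p - q‖^2/(2*lam))*(2*lam) = g p * (2*lam) + ‖p - q‖^2 := by
        field_simp
      have e3 : (g z + ‖z - q‖^2/(2*lam))*(2*lam) = g z * (2*lam) + ‖z - q‖^2 := by
        field_simp
      rw [e2, e3, hexp] at e1
      have e4 : 0 ≤ t * (2*lam*(g y - g p) + 2*⟪p - q, y - p⟫ + t*‖y - p‖^2) := by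
        nlinarith [e1, mul_le_mul_of_nonneg_left hcvx
          (le_of_lt (by positivity : (0:ℝ) < 2*lam))]
      nlinarith [e4, ht]
    exact le_of_forall_small' main
  rw [real_inner_smul_left]
  have hA : ⟪q - p, y - p⟫ = -⟪p - q, y - p⟫ := by
    rw [show q - p = -(p - q) by abel, inner_neg_left]
  rw [hA, mul_neg]
  have hfin : (g p - g y) * lam ≤ ⟪p - q, y - p⟫ := by nlinarith [concl]
  have h2 := (le_div_iff₀ hlam).mpr hfin
  rw [div_eq_inv_mul] at h2
  linarith

/-! ### The key comparison lemma -/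

lemma key_le (f g : H → ℝ)
    (hf : ConvexOn ℝ univ f) (hfc : Continuous f)
    (hg : ConvexOn ℝ univ g) (hgc : Continuous g)
    {zf zg : H} (hzf : zf ∈ argminSet f) (hzg : zg ∈ argminSet g)
    (hs : ∀ x, slopeFn f x = slopeFn g x) (hval : f zf = g zg) (x : H) :
    f x ≤ g x := by
  have hgne : ∀ q : H, (subdiff g q).Nonempty := subdiff_nonempty g hg hgc
  have hfne : ∀ q : H, (subdiff f q).Nonempty := subdiff_nonempty f hf hfc
  have hsg0 : 0 ≤ slopeFn g x := slopeFn_nonneg g x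
  have main : ∀ lam : ℝ, 0 < lam → f x - g x ≤ 0 + lam * (slopeFn g x)^2 := by
    intro lam hlam
    have EX : ∀ q : H, ∃ p, ∀ y,
        g p + ‖p - q‖ ^ 2 / (2 * lam) ≤ g y + ‖y - q‖ ^ 2 / (2 * lam) :=
      fun q => exists_prox g hg hgc (fun y => hzg y) lam hlam q
    set P : H → H := fun q => (EX q).choose with hPdef
    have hP : ∀ q y, g (P q) + ‖P q - q‖ ^ 2 / (2*lam) ≤ g y + ‖y - q‖ ^ 2 / (2*lam) :=
      fun q => (EX q).choose_spec
    have hPv : ∀ q, lam⁻¹ • (q - P q) ∈ subdiff g (P q) :=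
      fun q => prox_subdiff g hg hlam (hP q)
    have hnormv : ∀ q : H, ‖lam⁻¹ • (q - P q)‖ = ‖q - P q‖ / lam := by
      intro q
      rw [norm_smul, Real.norm_eq_abs, abs_inv, abs_of_pos hlam, div_eq_inv_mul]
    have hslope_next : ∀ q : H, slopeFn g (P q) ≤ ‖q - P q‖ / lam := by
      intro q
      have := slopeFn_le_norm (hPv q)
      rwa [hnormv q] at this
    have hstep_norm : ∀ q : H, ‖q - P q‖ ≤ lam * slopeFn g q := by
      intro q
      rcases eq_or_lt_of_le (norm_nonneg (q - P q)) with h0 | h0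
      · rw [← h0]; exact mul_nonneg hlam.le (slopeFn_nonneg g q)
      · have h1 : ‖q - P q‖ / lam ≤ slopeFn g q := by
          apply le_slopeFn (hgne q)
          intro w hw
          have hw1 := hw (P q)
          have hv1 := hPv q q
          rw [real_inner_smul_left] at hv1
          have hv2 : ⟪q - P q, q - P q⟫ = ‖q - P q‖^2 := real_inner_self_eq_norm_sq _
          rw [hv2] at hv1
          have hw2 : ⟪w, P q - q⟫ = -⟪w, q - P q⟫ := by
            rw [show P q - q = -(q - P q) by abel, inner_neg_right]
          rw [hw2] at hw1
          have hin : ⟪w, q - P q⟫ ≤ ‖w‖ * ‖q - P q‖ := real_inner_le_norm _ _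
          -- from hv1 : g (P q) + lam⁻¹ * ‖q - P q‖^2 ≤ g q
          -- from hw1 : g q - ⟪w, q - P q⟫ ≤ g (P q)
          have hcomb : lam⁻¹ * ‖q - P q‖^2 ≤ ‖w‖ * ‖q - P q‖ := by linarith
          rw [div_le_iff₀ hlam]
          have h3 : lam * (lam⁻¹ * ‖q - P q‖^2) ≤ lam * (‖w‖ * ‖q - P q‖) :=
            mul_le_mul_of_nonneg_left hcomb hlam.le
          rw [← mul_assoc, mul_inv_cancel₀ hlam.ne', one_mul] at h3
          have h4 : ‖q - P q‖^2 = ‖q - P q‖ * ‖q - P q‖ := sq ‖q - P q‖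
          nlinarith [h3, h0]
        have h2 := mul_le_mul_of_nonneg_left h1 hlam.le
        have h3 : lam * (‖q - P q‖ / lam) = ‖q - P q‖ := by field_simp
        rw [h3] at h2
        exact h2
    have hFejer : ∀ q : H, ‖P q - zg‖ ≤ ‖q - zg‖ := by
      intro q
      have h1 := hPv q zg
      rw [real_inner_smul_left] at h1
      have h2 : g zg ≤ g (P q) := hzg (P q)
      have h3 : ⟪q - P q, zg - P q⟫ ≤ 0 := by
        by_contra hcon
        push_neg at hcon
        have := mul_pos (inv_pos.mpr hlam) hcon
        linarith
      have hid : q - zg = (q - P q) + (P q - zg) := by abel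
      have hexp := norm_add_sq_real (q - P q) (P q - zg)
      rw [← hid] at hexp
      have h4 : ⟪q - P q, P q - zg⟫ = -⟪q - P q, zg - P q⟫ := by
        rw [show P q - zg = -(zg - P q) by abel, inner_neg_right]
      have h5 : ‖P q - zg‖^2 ≤ ‖q - zg‖^2 := by nlinarith [norm_nonneg (q - P q)]
      nlinarith [norm_nonneg (P q - zg), norm_nonneg (q - zg)]
    -- the proximal sequence
    set S : ℕ → H := fun k => Nat.recAux x (fun _ q => P q) k with hSdef
    have hS0 : S 0 = x := rfl
    have hSsucc : ∀ k, S (k + 1) = P (S k) := fun k => rfl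
    set d : ℕ → ℝ := fun k => ‖S k - S (k + 1)‖ with hddef
    have hd_nonneg : ∀ k, 0 ≤ d k := fun k => norm_nonneg _
    have hd_eq : ∀ k, d k = ‖S k - P (S k)‖ := fun k => rfl
    have hslope_S : ∀ k, slopeFn g (S (k + 1)) ≤ d k / lam := by
      intro k
      rw [hSsucc k, hd_eq k]
      exact hslope_next (S k)
    have hd0 : d 0 ≤ lam * slopeFn g x := by
      rw [hd_eq 0, hS0]
      exact hstep_norm x
    have hd_succ_le : ∀ k, d (k + 1) ≤ d k := by
      intro k
      rw [hd_eq (k+1)]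
      calc ‖S (k+1) - P (S (k+1))‖ ≤ lam * slopeFn g (S (k+1)) := hstep_norm _
        _ ≤ lam * (d k / lam) := mul_le_mul_of_nonneg_left (hslope_S k) hlam.le
        _ = d k := by field_simp
    -- one-step comparison
    have hstep : ∀ k, f (S k) - g (S k)
        ≤ (f (S (k+1)) - g (S (k+1))) + slopeFn g (S k) * d k - d k ^ 2 / lam := by
      intro k
      have h1 : f (S k) - f (S (k+1)) ≤ slopeFn f (S k) * ‖S k - S (k+1)‖ :=
        sub_le_slope_mul (hfne (S k)) (S (k+1))
      rw [hs (S k)] at h1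
      have h2 : d k ^ 2 / lam ≤ g (S k) - g (S (k+1)) := by
        have hv1 := hPv (S k) (S k)
        rw [real_inner_smul_left, real_inner_self_eq_norm_sq] at hv1
        rw [hSsucc k]
        rw [hd_eq k, div_eq_inv_mul]
        linarith
      have h3 : slopeFn g (S k) * ‖S k - S (k+1)‖ = slopeFn g (S k) * d k := rfl
      linarith
    -- invariant by induction
    have hinv : ∀ k, f x - g x
        ≤ (f (S (k+1)) - g (S (k+1))) + lam * (slopeFn g x)^2 - d k ^ 2 / lam := by
      intro k
      induction k with
      | zero =>
        have h1 := hstep 0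
        have hb : slopeFn g (S 0) * d 0 ≤ lam * (slopeFn g x)^2 := by
          have hseq0 : slopeFn g (S 0) = slopeFn g x := by rw [hS0]
          rw [hseq0]
          nlinarith [hd0, hsg0]
        have hfx : f (S 0) = f x := by rw [hS0]
        have hgx : g (S 0) = g x := by rw [hS0]
        rw [hfx, hgx] at h1
        linarith
      | succ k ih =>
        have h1 := hstep (k + 1)
        have ha := hslope_S k
        have hdd := hd_succ_le k
        have hb : slopeFn g (S (k+1)) * d (k+1) ≤ (d k / lam) * d k := by
          have hb1 : slopeFn g (S (k+1)) * d (k+1) ≤ (d k / lam) * d (k+1) :=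
            mul_le_mul_of_nonneg_right ha (hd_nonneg (k+1))
          have hb2 : (d k / lam) * d (k+1) ≤ (d k / lam) * d k :=
            mul_le_mul_of_nonneg_left hdd (by positivity)
          linarith
        have hc : (d k / lam) * d k = d k ^ 2 / lam := by
          rw [pow_two]; ring
        linarith
    -- Fejér monotonicity along the sequence
    have hFejS : ∀ k, ‖S k - zg‖ ≤ ‖x - zg‖ := by
      intro k
      induction k with
      | zero => rw [hS0]
      | succ k ih => exact le_trans (by rw [hSsucc k]; exact hFejer (S k)) ih
    set M : ℝ := ‖x - zg‖ + ‖zg - zf‖ with hM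
    have hM0 : 0 ≤ M := by positivity
    have hfg_bound : ∀ k, f (S (k+1)) - g (S (k+1)) ≤ (d k / lam) * M := by
      intro k
      have h1 : f (S (k+1)) - f zf ≤ slopeFn f (S (k+1)) * ‖S (k+1) - zf‖ :=
        sub_le_slope_mul (hfne _) zf
      have h2 : slopeFn f (S (k+1)) ≤ d k / lam := by
        rw [hs (S (k+1))]
        exact hslope_S k
      have h3 : ‖S (k+1) - zf‖ ≤ M := by
        calc ‖S (k+1) - zf‖ ≤ ‖S (k+1) - zg‖ + ‖zg - zf‖ := by
              have := norm_sub_le_norm_sub_add_norm_sub (S (k+1)) zg zf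
              exact this
          _ ≤ M := by
              rw [hM]
              have := hFejS (k+1)
              linarith
      have h4 : g zg ≤ g (S (k+1)) := hzg _
      have h5 : slopeFn f (S (k+1)) * ‖S (k+1) - zf‖ ≤ (d k / lam) * M := by
        apply mul_le_mul h2 h3 (norm_nonneg _)
        positivity
      linarith [hval]
    have hcomb : ∀ k, f x - g x ≤ lam * (slopeFn g x)^2 + (d k / lam) * M := by
      intro k
      have h1 := hinv k
      have h2 := hfg_bound k
      have h3 : (0:ℝ) ≤ d k ^ 2 / lam := by positivity
      linarith
    -- d k gets arbitrarily small
    have hsmall : ∀ δ : ℝ, 0 < δ → ∃ k, d k < δ := by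
      intro δ hδ
      by_contra hcon
      push_neg at hcon
      have hdec : ∀ N : ℕ, g (S N) ≤ g x - N * (δ^2 / lam) := by
        intro N
        induction N with
        | zero => simp [hS0]
        | succ N ihN =>
          have hv1 := hPv (S N) (S N)
          rw [real_inner_smul_left, real_inner_self_eq_norm_sq] at hv1
          have h2 : δ^2 / lam ≤ d N ^ 2 / lam := by
            gcongr
            exact hcon N
          have h3 : d N ^ 2 / lam ≤ g (S N) - g (S (N+1)) := by
            rw [hSsucc N, hd_eq N, div_eq_inv_mul]
            linarith
          have : ((N:ℝ) + 1) * (δ^2/lam) = N * (δ^2/lam) + δ^2/lam := by ring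
          push_cast
          linarith
      obtain ⟨N, hN⟩ := exists_nat_gt ((g x - g zg) / (δ^2 / lam))
      have h1 := hdec N
      have h2 := hzg (S N)
      have h3 : 0 < δ^2 / lam := by positivity
      have h4 : (g x - g zg) < N * (δ^2/lam) := by
        rw [div_lt_iff₀ h3] at hN
        linarith
      linarith
    -- conclude: f x - g x ≤ lam * s^2 + ε for every ε > 0
    have : ∀ ε : ℝ, 0 < ε → f x - g x ≤ lam * (slopeFn g x)^2 + ε := by
      intro ε hε
      obtain ⟨k, hk⟩ := hsmall (ε * lam / (M + 1)) (by positivity)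
      have h1 := hcomb k
      have h2 : (d k / lam) * M ≤ ε := by
        have h3 : d k / lam ≤ ε / (M + 1) := by
          rw [div_le_div_iff₀ hlam (by positivity : (0:ℝ) < M + 1)]
          calc d k * (M + 1) ≤ (ε * lam / (M + 1)) * (M + 1) := by
                apply mul_le_mul_of_nonneg_right hk.le (by positivity)
            _ = ε * lam := by field_simp
          
        calc (d k / lam) * M ≤ (ε / (M + 1)) * M :=
              mul_le_mul_of_nonneg_right h3 hM0
          _ ≤ ε := by
              rw [div_mul_eq_mul_div, div_le_iff₀ (by positivity : (0:ℝ) < M + 1)]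
              nlinarith
      linarith
    linarith [le_add_eps' this]
  -- let lam → 0
  have final : ∀ ε : ℝ, 0 < ε → f x - g x ≤ 0 + ε := by
    intro ε hε
    have h1 := main (ε / ((slopeFn g x)^2 + 1)) (by positivity)
    have h2 : (ε / ((slopeFn g x)^2 + 1)) * (slopeFn g x)^2 ≤ ε := by
      rw [div_mul_eq_mul_div, div_le_iff₀ (by positivity : (0:ℝ) < (slopeFn g x)^2 + 1)]
      nlinarith [sq_nonneg (slopeFn g x)]
    linarith
  have := le_add_eps' final
  linarith

theorem slope_determination
    (f g : H → ℝ)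
    (hf : ConvexOn ℝ univ f) (hfc : Continuous f)
    (hg : ConvexOn ℝ univ g) (hgc : Continuous g)
    (hCf : (argminSet f).Nonempty) (hCfb : IsBounded (argminSet f))
    (hCg : (argminSet g).Nonempty) (hCgb : IsBounded (argminSet g))
    (hs : ∀ x, slopeFn f x = slopeFn g x)
    (hmin : ∀ x ∈ argminSet f ∪ argminSet g, f x = g x) :
    f = g := by
  obtain ⟨zf, hzf⟩ := hCf
  obtain ⟨zg, hzg⟩ := hCg
  -- zf is also a minimizer of g
  have hzf_g : zf ∈ argminSet g := by
    apply slope_zero_mem_argmin hg hgc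
    rw [← hs zf]
    exact slopeFn_eq_zero_of_argmin hzf
  -- zg is also a minimizer of f
  have hzg_f : zg ∈ argminSet f := by
    apply slope_zero_mem_argmin hf hfc
    rw [hs zg]
    exact slopeFn_eq_zero_of_argmin hzg
  have hval1 : f zf = g zf := hmin zf (Or.inl hzf)
  have hval2 : f zg = g zg := hmin zg (Or.inr hzg)
  funext x
  apply le_antisymm
  · exact key_le f g hf hfc hg hgc hzf hzf_g hs hval1 x
  · exact key_le g f hg hgc hf hfc hzg hzg_f (fun y => (hs y).symm) hval2.symm x
end
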